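/- Let ℌ be a complex Hilbert space, let ψ ∈ ℌ be a unit vector, let L₁, …, Lₙ be bounded operators on ℌ, and set λ_k = ⟨ψ, (L_k + L_k*)ψ⟩ for each k (each λ_k is a real number). If Σ_{k=1}^n λ_k·L_k = (1/4)(Σ_{k=1}^n λ_k²)·I as operators on ℌ, then λ_k = 0 for all k. -/

import Mathlib

theorem lambda_contradiction_step {𝓗 : Type*} [NormedAddCommGroup 𝓗]
    [InnerProductSpace ℂ 𝓗] [CompleteSpace 𝓗]
    (ψ : 𝓗) (hψ : ‖ψ‖ = 1)
    (n : ℕ) (L : Fin n → 𝓗 →L[ℂ] 𝓗) (lam : Fin n → ℝ)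
    (hlam : ∀ k, (lam k : ℂ) = inner ℂ ψ (((L k) + ContinuousLinearMap.adjoint (L k)) ψ))
    (hid : ∑ k, (lam k : ℂ) • L k
      = (((1 / 4 : ℝ) * ∑ k, lam k ^ 2 : ℝ) : ℂ) • (1 : 𝓗 →L[ℂ] 𝓗)) :
    ∀ k, lam k = 0 := by
  set S : ℝ := ∑ k, lam k ^ 2 with hS
  have hψψ : (inner ℂ ψ ψ : ℂ) = 1 := by
    rw [inner_self_eq_norm_sq_to_K, hψ]; norm_num
  have h1 : ∑ k, (lam k : ℂ) * inner ℂ ψ ((L k) ψ) = (1 / 4 : ℂ) * S := by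
    calc ∑ k, (lam k : ℂ) * inner ℂ ψ ((L k) ψ)
        = inner ℂ ψ ((∑ k, (lam k : ℂ) • L k) ψ) := by
          rw [ContinuousLinearMap.sum_apply, inner_sum]
          exact Finset.sum_congr rfl fun k _ => by
            rw [ContinuousLinearMap.smul_apply, inner_smul_right]
      _ = inner ℂ ψ (((((1 / 4 : ℝ) * S : ℝ) : ℂ) • (1 : 𝓗 →L[ℂ] 𝓗)) ψ) := by rw [hid]
      _ = (1 / 4 : ℂ) * S := by
          rw [ContinuousLinearMap.smul_apply, inner_smul_right,
            ContinuousLinearMap.one_apply, hψψ]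
          push_cast; ring
  have h2 : ∑ k, (lam k : ℂ) * inner ℂ ψ ((ContinuousLinearMap.adjoint (L k)) ψ)
      = (1 / 4 : ℂ) * S := by
    calc ∑ k, (lam k : ℂ) * inner ℂ ψ ((ContinuousLinearMap.adjoint (L k)) ψ)
        = (starRingEnd ℂ) (∑ k, (lam k : ℂ) * inner ℂ ψ ((L k) ψ)) := by
          rw [map_sum]
          exact Finset.sum_congr rfl fun k _ => by
            rw [map_mul, Complex.conj_ofReal, inner_conj_symm,
              ContinuousLinearMap.adjoint_inner_right]
      _ = (starRingEnd ℂ) ((1 / 4 : ℂ) * S) := by rw [h1]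
      _ = (1 / 4 : ℂ) * S := by
          rw [map_mul, Complex.conj_ofReal]; congr 1
          rw [map_div₀, map_one]; norm_num [Complex.ext_iff]
  have h3 : (S : ℂ) = (1 / 2 : ℂ) * S := by
    have hsum : ∑ k, (lam k : ℂ) * (lam k : ℂ)
        = ∑ k, ((lam k : ℂ) * inner ℂ ψ ((L k) ψ)
          + (lam k : ℂ) * inner ℂ ψ ((ContinuousLinearMap.adjoint (L k)) ψ)) := by
      refine Finset.sum_congr rfl fun k _ => ?_
      rw [← mul_add]
      congr 1
      rw [hlam k]
      simp [inner_add_right]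
    rw [Finset.sum_add_distrib, h1, h2] at hsum
    have hl : ((S : ℂ)) = ∑ k, (lam k : ℂ) * (lam k : ℂ) := by
      rw [hS]; push_cast
      exact Finset.sum_congr rfl fun k _ => by ring
    calc (S : ℂ) = ∑ k, (lam k : ℂ) * (lam k : ℂ) := hl
      _ = (1 / 4 : ℂ) * S + (1 / 4 : ℂ) * S := hsum
      _ = (1 / 2 : ℂ) * S := by ring
  have hS0 : S = 0 := by
    have h4 : (S : ℂ) = ((S / 2 : ℝ) : ℂ) := by rw [h3]; push_cast; ring
    have := Complex.ofReal_injective h4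
    linarith
  intro k
  have hk : lam k ^ 2 = 0 := by
    have hnn : ∀ i ∈ Finset.univ, (0:ℝ) ≤ lam i ^ 2 := fun i _ => sq_nonneg _
    exact (Finset.sum_eq_zero_iff_of_nonneg hnn).mp hS0 k (Finset.mem_univ k)
  exact pow_eq_zero_iff (by norm_num) |>.mp hk
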